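/- Let V be in the class 𝒞 with growth exponent K, and for a ∈ ℝ set W_a(u) = V(a+u) + V(a−u) − 2V(a) and Z(a) = ∫_ℝ e^{−W_a(u)} du. Then there exists a constant C > 0 (depending only on V) such that Z(a) ≥ 1/(C·max(1,|a|^K)) for all a ∈ ℝ, and consequently the sup-norm of the resampling density satisfies ‖ρ_{b,c}‖_∞ ≤ C·max(1,|c−b|^K) for all b, c ∈ ℝ. -/

import Mathlib

open MeasureTheory Filter Real

noncomputable section

/-- The class 𝒞 of potentials: convex, at most polynomial growth, non-affine
(the asymptotic slopes at `+∞` and `-∞`, taken in the extended reals, differ). -/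
structure InClassC (V : ℝ → ℝ) : Prop where
  convex : ConvexOn ℝ Set.univ V
  growth : ∃ C > (0 : ℝ), ∃ K : ℝ, 1 ≤ K ∧ ∀ x : ℝ, |V x| ≤ C * (1 + |x|) ^ K
  slopes : ∃ vm vp : EReal,
    Tendsto (fun x : ℝ => ((V x / x : ℝ) : EReal)) atBot (nhds vm) ∧
    Tendsto (fun x : ℝ => ((V x / x : ℝ) : EReal)) atTop (nhds vp) ∧
    vm < vp

/-- The resampling density `ρ_{b,c}`. -/
def rho (V : ℝ → ℝ) (b c u : ℝ) : ℝ :=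
  Real.exp (-(V (u - b) + V (c - u))) / ∫ s : ℝ, Real.exp (-(V (s - b) + V (c - s)))

/-- The symmetrized resampling potential `W_a(u) = V(a+u) + V(a-u) - 2V(a)`. -/
def Wfun (V : ℝ → ℝ) (a u : ℝ) : ℝ := V (a + u) + V (a - u) - 2 * V a

/-- Its partition function `Z(a) = ∫ e^{-W_a(u)} du`. -/
def Zfun (V : ℝ → ℝ) (a : ℝ) : ℝ := ∫ u : ℝ, Real.exp (-(Wfun V a u))

/-! ### Auxiliary lemmas -/

lemma Wfun_zero (V : ℝ → ℝ) (a : ℝ) : Wfun V a 0 = 0 := by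
  simp [Wfun]; ring

lemma Wfun_neg (V : ℝ → ℝ) (a u : ℝ) : Wfun V a (-u) = Wfun V a u := by
  unfold Wfun
  rw [show a + -u = a - u by ring, show a - -u = a + u by ring]
  ring

lemma Wfun_nonneg {V : ℝ → ℝ} (hc : ConvexOn ℝ Set.univ V) (a u : ℝ) : 0 ≤ Wfun V a u := by
  have h := hc.2 (Set.mem_univ (a + u)) (Set.mem_univ (a - u))
    (by norm_num : (0:ℝ) ≤ 1/2) (by norm_num : (0:ℝ) ≤ 1/2) (by norm_num : (1:ℝ)/2 + 1/2 = 1)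
  simp only [smul_eq_mul] at h
  rw [show (1/2 : ℝ) * (a + u) + (1/2 : ℝ) * (a - u) = a by ring] at h
  unfold Wfun; linarith

lemma Wfun_convex_comb {V : ℝ → ℝ} (hc : ConvexOn ℝ Set.univ V) (a : ℝ) {s t x y : ℝ}
    (hs : 0 ≤ s) (ht : 0 ≤ t) (hst : s + t = 1) :
    Wfun V a (s * x + t * y) ≤ s * Wfun V a x + t * Wfun V a y := by
  have h1 := hc.2 (Set.mem_univ (a + x)) (Set.mem_univ (a + y)) hs ht hst
  have h2 := hc.2 (Set.mem_univ (a - x)) (Set.mem_univ (a - y)) hs ht hst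
  simp only [smul_eq_mul] at h1 h2
  rw [show s * (a + x) + t * (a + y) = a + (s * x + t * y) by linear_combination a * hst] at h1
  rw [show s * (a - x) + t * (a - y) = a - (s * x + t * y) by linear_combination a * hst] at h2
  unfold Wfun
  have : s * (V (a + x) + V (a - x) - 2 * V a) + t * (V (a + y) + V (a - y) - 2 * V a)
      = (s * V (a + x) + t * V (a + y)) + (s * V (a - x) + t * V (a - y)) - 2 * V a := by
    linear_combination (-2 * V a) * hst
  rw [this]
  linarith

/-- Linear lower bound from convexity: for `0 < u₀ ≤ r`, `W(u₀)/u₀ * r ≤ W(r)`. -/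
lemma Wfun_linear_lb {V : ℝ → ℝ} (hc : ConvexOn ℝ Set.univ V) (a : ℝ) {u₀ r : ℝ}
    (h0 : 0 < u₀) (hr : u₀ ≤ r) :
    Wfun V a u₀ / u₀ * r ≤ Wfun V a r := by
  have hrpos : 0 < r := lt_of_lt_of_le h0 hr
  have hrne : r ≠ 0 := ne_of_gt hrpos
  have hs0 : 0 ≤ u₀ / r := le_of_lt (div_pos h0 hrpos)
  have hs1 : u₀ / r ≤ 1 := (div_le_one hrpos).mpr hr
  have h := Wfun_convex_comb hc a (s := u₀ / r) (t := 1 - u₀ / r) (x := r) (y := 0)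
    hs0 (by linarith) (by ring)
  rw [show u₀ / r * r + (1 - u₀ / r) * 0 = u₀ by field_simp; ring] at h
  rw [Wfun_zero, mul_zero, add_zero] at h
  rw [div_mul_eq_mul_div, div_le_iff₀ h0]
  calc Wfun V a u₀ * r ≤ u₀ / r * Wfun V a r * r :=
        mul_le_mul_of_nonneg_right h (le_of_lt hrpos)
    _ = Wfun V a r * u₀ := by field_simp

lemma Wfun_abs (V : ℝ → ℝ) (a u : ℝ) : Wfun V a |u| = Wfun V a u := by
  rcases abs_cases u with ⟨h, _⟩ | ⟨h, _⟩
  · rw [h]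
  · rw [h, Wfun_neg]

/-- Non-affineness: for every `a`, `W_a` is positive somewhere. -/
lemma exists_Wfun_pos {V : ℝ → ℝ} (hV : InClassC V) (a : ℝ) :
    ∃ u₀ : ℝ, 0 < u₀ ∧ 0 < Wfun V a u₀ := by
  by_contra hcon
  push_neg at hcon
  have hzero : ∀ u : ℝ, Wfun V a u = 0 := by
    intro u
    rcases lt_trichotomy u 0 with hu | hu | hu
    · rw [← Wfun_neg]; exact le_antisymm (hcon (-u) (by linarith)) (Wfun_nonneg hV.convex a (-u))
    · rw [hu, Wfun_zero]
    · exact le_antisymm (hcon u hu) (Wfun_nonneg hV.convex a u)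
  have hc := hV.convex
  have hodd : ∀ u : ℝ, V (a - u) - V a = -(V (a + u) - V a) := by
    intro u
    have := hzero u
    unfold Wfun at this
    linarith
  have hlin_nonneg : ∀ u : ℝ, 0 ≤ u → V (a + u) = V a + (V (a + 1) - V a) * u := by
    intro u hu
    rcases le_total u 1 with h1 | h1
    · -- u ∈ [0,1]
      have hA := hc.2 (Set.mem_univ a) (Set.mem_univ (a + 1))
        (by linarith : (0:ℝ) ≤ 1 - u) hu (by ring)
      have hB := hc.2 (Set.mem_univ a) (Set.mem_univ (a - 1))
        (by linarith : (0:ℝ) ≤ 1 - u) hu (by ring)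
      simp only [smul_eq_mul] at hA hB
      rw [show (1 - u) * a + u * (a + 1) = a + u by ring] at hA
      rw [show (1 - u) * a + u * (a - 1) = a - u by ring] at hB
      have hau : V (a - u) = 2 * V a - V (a + u) := by have := hodd u; linarith
      have hVm1' : V (a - 1) = 2 * V a - V (a + 1) := by have := hodd 1; linarith
      rw [hau, hVm1'] at hB
      linarith
    · -- u ≥ 1
      have hupos : 0 < u := by linarith
      have hune : u ≠ 0 := ne_of_gt hupos
      have hs : (0:ℝ) ≤ 1 / u := by positivity
      have ht : (0:ℝ) ≤ 1 - 1 / u := by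
        rw [sub_nonneg, div_le_one hupos]; exact h1
      have hst : 1 / u + (1 - 1 / u) = 1 := by ring
      have hA := hc.2 (Set.mem_univ (a + u)) (Set.mem_univ a) hs ht hst
      have hB := hc.2 (Set.mem_univ (a - u)) (Set.mem_univ a) hs ht hst
      simp only [smul_eq_mul] at hA hB
      rw [show 1 / u * (a + u) + (1 - 1 / u) * a = a + 1 by field_simp; ring] at hA
      rw [show 1 / u * (a - u) + (1 - 1 / u) * a = a - 1 by field_simp; ring] at hB
      have hau : V (a - u) = 2 * V a - V (a + u) := by have := hodd u; linarith
      have hVm1' : V (a - 1) = 2 * V a - V (a + 1) := by have := hodd 1; linarith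
      rw [hau, hVm1'] at hB
      have hA' : V (a + 1) * u ≤ V (a + u) + (u - 1) * V a := by
        have h2 := mul_le_mul_of_nonneg_right hA (le_of_lt hupos)
        have h3 : (1 / u * V (a + u) + (1 - 1 / u) * V a) * u
            = V (a + u) + (u - 1) * V a := by first | (field_simp; ring) | field_simp
        linarith [h2, h3.le, h3.ge]
      have hB' : (2 * V a - V (a + 1)) * u
          ≤ (2 * V a - V (a + u)) + (u - 1) * V a := by
        have h2 := mul_le_mul_of_nonneg_right hB (le_of_lt hupos)
        have h3 : (1 / u * (2 * V a - V (a + u)) + (1 - 1 / u) * V a) * u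
            = (2 * V a - V (a + u)) + (u - 1) * V a := by first | (field_simp; ring) | field_simp
        linarith [h2, h3.le, h3.ge]
      linarith [hA', hB']
  have hlin : ∀ x : ℝ, V x = V a + (V (a + 1) - V a) * (x - a) := by
    intro x
    rcases le_total a x with h | h
    · have := hlin_nonneg (x - a) (by linarith)
      rw [show a + (x - a) = x by ring] at this
      linarith [this]
    · have h1 := hlin_nonneg (a - x) (by linarith)
      have h2 := hodd (a - x)
      rw [show a - (a - x) = x by ring] at h2
      rw [show a + (a - x) = 2 * a - x by ring] at h1 h2
      linarith [h1, h2]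
  obtain ⟨vm, vp, hvm, hvp, hlt⟩ := hV.slopes
  set m : ℝ := V (a + 1) - V a with hm
  set c : ℝ := V a - m * a with hcdef
  have heq : ∀ x : ℝ, x ≠ 0 → V x / x = m + c * x⁻¹ := by
    intro x hx
    rw [hlin x, hcdef, hm]
    field_simp
    ring
  have htop : Tendsto (fun x : ℝ => V x / x) atTop (nhds m) := by
    have h1 : Tendsto (fun x : ℝ => m + c * x⁻¹) atTop (nhds (m + c * 0)) :=
      tendsto_const_nhds.add (tendsto_const_nhds.mul tendsto_inv_atTop_zero)
    rw [mul_zero, add_zero] at h1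
    apply h1.congr'
    filter_upwards [eventually_gt_atTop (0:ℝ)] with x hx
    exact (heq x (ne_of_gt hx)).symm
  have hbot : Tendsto (fun x : ℝ => V x / x) atBot (nhds m) := by
    have hinv : Tendsto (fun x : ℝ => x⁻¹) atBot (nhds 0) := by
      have h2 : Tendsto (Neg.neg : ℝ → ℝ) atBot atTop := tendsto_neg_atBot_atTop
      have h1 : Tendsto (fun x : ℝ => -(-x)⁻¹) atBot (nhds (-0)) :=
        (tendsto_inv_atTop_zero.comp h2).neg
      rw [neg_zero] at h1
      apply h1.congr
      intro x; rw [inv_neg, neg_neg]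
    have h1 : Tendsto (fun x : ℝ => m + c * x⁻¹) atBot (nhds (m + c * 0)) :=
      tendsto_const_nhds.add (tendsto_const_nhds.mul hinv)
    rw [mul_zero, add_zero] at h1
    apply h1.congr'
    filter_upwards [eventually_lt_atBot (0:ℝ)] with x hx
    exact (heq x (ne_of_lt hx)).symm
  have htopE : Tendsto (fun x : ℝ => ((V x / x : ℝ) : EReal)) atTop (nhds ((m : EReal))) :=
    (continuous_coe_real_ereal.tendsto m).comp htop
  have hbotE : Tendsto (fun x : ℝ => ((V x / x : ℝ) : EReal)) atBot (nhds ((m : EReal))) :=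
    (continuous_coe_real_ereal.tendsto m).comp hbot
  have hvm' : vm = (m : EReal) := tendsto_nhds_unique hvm hbotE
  have hvp' : vp = (m : EReal) := tendsto_nhds_unique hvp htopE
  rw [hvm', hvp'] at hlt
  exact lt_irrefl _ hlt

lemma integrable_exp_neg_abs {b : ℝ} (hb : 0 < b) :
    Integrable (fun u : ℝ => Real.exp (-b * |u|)) := by
  have h1 : IntegrableOn (fun u : ℝ => Real.exp (-b * |u|)) (Set.Ici 0) := by
    rw [integrableOn_Ici_iff_integrableOn_Ioi]
    refine (exp_neg_integrableOn_Ioi 0 hb).congr_fun ?_ measurableSet_Ioi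
    intro x hx
    show Real.exp (-b * x) = Real.exp (-b * |x|)
    rw [abs_of_nonneg (le_of_lt hx)]
  rw [← integrableOn_univ, ← Set.Iio_union_Ici (a := (0:ℝ)), integrableOn_union]
  refine ⟨?_, h1⟩
  rw [← (Measure.measurePreserving_neg (volume : Measure ℝ)).integrableOn_comp_preimage
      (Homeomorph.neg ℝ).measurableEmbedding]
  simp only [Function.comp_def, abs_neg, Set.neg_preimage, Set.neg_Iio, neg_zero]
  exact h1.mono_set (Set.Ioi_subset_Ici le_rfl)

lemma continuous_of_convexOn_univ {V : ℝ → ℝ} (hc : ConvexOn ℝ Set.univ V) : Continuous V :=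
  continuousOn_univ.mp (hc.continuousOn isOpen_univ)

lemma integrable_exp_neg_Wfun {V : ℝ → ℝ} (hV : InClassC V) (a : ℝ) :
    Integrable (fun u : ℝ => Real.exp (-(Wfun V a u))) := by
  obtain ⟨u₀, hu₀, hWpos⟩ := exists_Wfun_pos hV a
  set ε := Wfun V a u₀ with hε
  set b := ε / u₀ with hb
  have hbpos : 0 < b := div_pos hWpos hu₀
  have hVc : Continuous V := continuous_of_convexOn_univ hV.convex
  apply Integrable.mono' ((integrable_exp_neg_abs hbpos).const_mul (Real.exp ε))
  · apply Continuous.aestronglyMeasurable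
    apply Real.continuous_exp.comp
    apply Continuous.neg
    unfold Wfun
    fun_prop
  · refine Filter.Eventually.of_forall (fun u => ?_)
    rw [Real.norm_eq_abs, abs_of_pos (Real.exp_pos _), ← Real.exp_add]
    apply Real.exp_le_exp.mpr
    rcases le_total |u| u₀ with h | h
    · have h1 : b * |u| ≤ b * u₀ := mul_le_mul_of_nonneg_left h (le_of_lt hbpos)
      have h2 : b * u₀ = ε := by rw [hb]; field_simp
      have h3 : 0 ≤ Wfun V a u := Wfun_nonneg hV.convex a u
      linarith
    · have h1 : ε / u₀ * |u| ≤ Wfun V a |u| := Wfun_linear_lb hV.convex a hu₀ h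
      rw [Wfun_abs] at h1
      have h3 : 0 ≤ ε := le_of_lt hWpos
      rw [hb]
      linarith

/-- **Lower bound on `Z(a)` and sup-norm bound on the resampling density.** For `V ∈ 𝒞` with
growth exponent `K`, there is `C > 0` with `Z(a) ≥ 1/(C max(1,|a|^K))`, and consequently
`‖ρ_{b,c}‖_∞ ≤ C max(1, |c-b|^K)`. -/
theorem partition_function_lower_bound (V : ℝ → ℝ) (hV : InClassC V)
    (K : ℝ) (hK : 1 ≤ K) (hgrowth : ∃ C > (0 : ℝ), ∀ x : ℝ, |V x| ≤ C * (1 + |x|) ^ K) :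
    ∃ C > (0 : ℝ),
      (∀ a : ℝ, 1 / (C * max 1 (|a| ^ K)) ≤ Zfun V a) ∧
      (∀ b c u : ℝ, rho V b c u ≤ C * max 1 (|c - b| ^ K)) := by
  obtain ⟨C₀, hC₀, hg⟩ := hgrowth
  have hK0 : (0:ℝ) ≤ K := by linarith
  set C₂ : ℝ := 4 * C₀ * 3 ^ K + 1 with hC₂def
  have h3K : (0:ℝ) < 3 ^ K := Real.rpow_pos_of_pos (by norm_num) K
  have hC₂pos : (0:ℝ) < C₂ := by positivity
  have hC₂one : (1:ℝ) ≤ C₂ := by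
    have : (0:ℝ) ≤ 4 * C₀ * 3 ^ K := by positivity
    rw [hC₂def]; linarith
  set C : ℝ := Real.exp 1 * C₂ with hCdef
  have hCpos : 0 < C := by positivity
  have hmaxpow : ∀ a : ℝ, (max 1 |a|) ^ K = max 1 (|a| ^ K) := by
    intro a
    rcases le_total |a| 1 with h | h
    · rw [max_eq_left h, Real.one_rpow, max_eq_left (Real.rpow_le_one (abs_nonneg a) h hK0)]
    · rw [max_eq_right h, max_eq_right (Real.one_le_rpow h hK0)]
  have hW1 : ∀ a : ℝ, Wfun V a 1 ≤ C₂ * max 1 (|a| ^ K) := by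
    intro a
    have hmax0 : (0:ℝ) ≤ max 1 |a| := le_trans zero_le_one (le_max_left _ _)
    have h1m : |a| ≤ max 1 |a| := le_max_right _ _
    have h2m : (1:ℝ) ≤ max 1 |a| := le_max_left _ _
    have key : ∀ x : ℝ, |x| ≤ 1 + |a| → V x ≤ C₀ * (3 ^ K * max 1 (|a| ^ K)) ∧
        -V x ≤ C₀ * (3 ^ K * max 1 (|a| ^ K)) := by
      intro x hx
      have hb : (1 + |x|) ^ K ≤ 3 ^ K * max 1 (|a| ^ K) := by
        rw [← hmaxpow, ← Real.mul_rpow (by norm_num) hmax0]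
        apply Real.rpow_le_rpow (by positivity) ?_ hK0
        linarith
      have hg1 := hg x
      constructor
      · calc V x ≤ |V x| := le_abs_self _
          _ ≤ C₀ * (1 + |x|) ^ K := hg1
          _ ≤ C₀ * (3 ^ K * max 1 (|a| ^ K)) := mul_le_mul_of_nonneg_left hb (le_of_lt hC₀)
      · calc -V x ≤ |V x| := neg_le_abs _
          _ ≤ C₀ * (1 + |x|) ^ K := hg1
          _ ≤ C₀ * (3 ^ K * max 1 (|a| ^ K)) := mul_le_mul_of_nonneg_left hb (le_of_lt hC₀)
    have e1 := (key (a + 1) (by calc |a + 1| ≤ |a| + |(1:ℝ)| := abs_add_le a 1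
      _ = 1 + |a| := by rw [abs_one]; ring)).1
    have e2 := (key (a - 1) (by
      calc |a - 1| = |a + (-1)| := by rw [sub_eq_add_neg]
        _ ≤ |a| + |(-1:ℝ)| := abs_add_le a (-1)
        _ = 1 + |a| := by rw [abs_neg, abs_one]; ring)).1
    have e3 := (key a (by linarith [abs_nonneg a])).2
    unfold Wfun
    have hfin : 4 * (C₀ * (3 ^ K * max 1 (|a| ^ K))) ≤ C₂ * max 1 (|a| ^ K) := by
      have hmm : (1:ℝ) ≤ max 1 (|a| ^ K) := le_max_left _ _
      rw [hC₂def]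
      nlinarith
    linarith
  have hZlb : ∀ a : ℝ, 1 / (C * max 1 (|a| ^ K)) ≤ Zfun V a := by
    intro a
    set M : ℝ := max 1 (|a| ^ K) with hMdef
    have hM1 : (1:ℝ) ≤ M := le_max_left _ _
    have hMpos : (0:ℝ) < M := by linarith
    set D : ℝ := C₂ * M with hDdef
    have hD1 : (1:ℝ) ≤ D := by rw [hDdef]; nlinarith
    have hDpos : (0:ℝ) < D := by linarith
    set δ : ℝ := 1 / D with hδdef
    have hδpos : 0 < δ := by positivity
    have hδ1 : δ ≤ 1 := by rw [hδdef, div_le_one hDpos]; exact hD1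
    have hint := integrable_exp_neg_Wfun hV a
    have hpt : ∀ u ∈ Set.Icc (0:ℝ) δ, Real.exp (-1) ≤ Real.exp (-(Wfun V a u)) := by
      intro u hu
      obtain ⟨hu0, huδ⟩ := hu
      apply Real.exp_le_exp.mpr
      simp only [neg_le_neg_iff]
      have hu1 : u ≤ 1 := le_trans huδ hδ1
      have hcc := Wfun_convex_comb hV.convex a (s := u) (t := 1 - u) (x := 1) (y := 0)
        hu0 (by linarith) (by ring)
      rw [show u * 1 + (1 - u) * 0 = u by ring] at hcc
      rw [Wfun_zero, mul_zero, add_zero] at hcc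
      have hW1a := hW1 a
      have hW1nn : 0 ≤ Wfun V a 1 := Wfun_nonneg hV.convex a 1
      have hmul : u * Wfun V a 1 ≤ δ * (C₂ * M) :=
        mul_le_mul huδ hW1a hW1nn (le_of_lt hδpos)
      have hδD : δ * (C₂ * M) = 1 := by
        rw [hδdef, hDdef]; field_simp
      linarith
    have hstep1 : ∫ u in Set.Icc (0:ℝ) δ, Real.exp (-(Wfun V a u)) ≤ Zfun V a := by
      unfold Zfun
      apply setIntegral_le_integral hint
      exact Filter.Eventually.of_forall (fun u => le_of_lt (Real.exp_pos _))
    have hstep2 : Real.exp (-1) * δ ≤ ∫ u in Set.Icc (0:ℝ) δ, Real.exp (-(Wfun V a u)) := by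
      have hconst : ∫ _ in Set.Icc (0:ℝ) δ, Real.exp (-1) = Real.exp (-1) * δ := by
        rw [setIntegral_const, measureReal_def, Real.volume_Icc, smul_eq_mul,
          ENNReal.toReal_ofReal (by linarith : (0:ℝ) ≤ δ - 0)]
        ring
      rw [← hconst]
      apply setIntegral_mono_on
      · exact integrableOn_const (by rw [Real.volume_Icc]; exact ENNReal.ofReal_ne_top)
      · exact hint.integrableOn
      · exact measurableSet_Icc
      · exact hpt
    have hfinal : Real.exp (-1) * δ = 1 / (C * M) := by
      have h1 : Real.exp 1 ≠ 0 := Real.exp_ne_zero 1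
      have h2 : C₂ ≠ 0 := ne_of_gt hC₂pos
      have h3 : M ≠ 0 := ne_of_gt hMpos
      rw [hδdef, hDdef, hCdef, Real.exp_neg]
      field_simp
    rw [hMdef] at hfinal
    linarith [le_trans hstep2 hstep1, hfinal.le]
  refine ⟨C, hCpos, hZlb, ?_⟩
  intro b c u
  set a' : ℝ := (c - b) / 2 with ha'
  set m : ℝ := (c + b) / 2 with hmdef
  have hZpos : 0 < Zfun V a' := lt_of_lt_of_le (by positivity) (hZlb a')
  have hdenom : (∫ s : ℝ, Real.exp (-(V (s - b) + V (c - s))))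
      = Real.exp (-(2 * V a')) * Zfun V a' := by
    rw [← MeasureTheory.integral_add_right_eq_self
      (fun s => Real.exp (-(V (s - b) + V (c - s)))) m]
    unfold Zfun
    rw [← MeasureTheory.integral_const_mul]
    congr 1
    funext x
    rw [← Real.exp_add]
    congr 1
    rw [show x + m - b = a' + x by rw [ha', hmdef]; ring,
      show c - (x + m) = a' - x by rw [ha', hmdef]; ring]
    unfold Wfun
    ring
  have hnum : Real.exp (-(V (u - b) + V (c - u))) ≤ Real.exp (-(2 * V a')) := by
    apply Real.exp_le_exp.mpr
    simp only [neg_le_neg_iff]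
    have h := hV.convex.2 (Set.mem_univ (u - b)) (Set.mem_univ (c - u))
      (by norm_num : (0:ℝ) ≤ 1/2) (by norm_num : (0:ℝ) ≤ 1/2) (by norm_num : (1:ℝ)/2 + 1/2 = 1)
    simp only [smul_eq_mul] at h
    rw [show (1/2:ℝ) * (u - b) + (1/2:ℝ) * (c - u) = a' by rw [ha']; ring] at h
    linarith
  have hrho : rho V b c u ≤ 1 / Zfun V a' := by
    unfold rho
    rw [hdenom]
    have hpos : 0 < Real.exp (-(2 * V a')) * Zfun V a' := by positivity
    have h1 : Real.exp (-(V (u - b) + V (c - u))) / (Real.exp (-(2 * V a')) * Zfun V a')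
        ≤ Real.exp (-(2 * V a')) / (Real.exp (-(2 * V a')) * Zfun V a') :=
      (div_le_div_iff_of_pos_right hpos).mpr hnum
    have h2 : Real.exp (-(2 * V a')) / (Real.exp (-(2 * V a')) * Zfun V a')
        = 1 / Zfun V a' := by
      rw [div_mul_eq_div_div, div_self (ne_of_gt (Real.exp_pos _))]
    linarith [h1, h2.le, h2.ge]
  have hMpos' : 0 < C * max 1 (|a'| ^ K) := by positivity
  have h3 : 1 / Zfun V a' ≤ C * max 1 (|a'| ^ K) := by
    have hone : 1 ≤ Zfun V a' * (C * max 1 (|a'| ^ K)) := (div_le_iff₀ hMpos').mp (hZlb a')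
    rw [div_le_iff₀ hZpos, mul_comm]
    linarith
  have h4 : max 1 (|a'| ^ K) ≤ max 1 (|c - b| ^ K) := by
    apply max_le_max le_rfl
    apply Real.rpow_le_rpow (abs_nonneg _) ?_ hK0
    rw [ha', abs_div]
    have : |(2:ℝ)| = 2 := by norm_num
    rw [this]
    linarith [abs_nonneg (c - b)]
  calc rho V b c u ≤ 1 / Zfun V a' := hrho
    _ ≤ C * max 1 (|a'| ^ K) := h3
    _ ≤ C * max 1 (|c - b| ^ K) := mul_le_mul_of_nonneg_left h4 (le_of_lt hCpos)

end
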